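/- Let A be a commutative ℂ-algebra (of functionals) and Δ a fixed bilinear 'propagator' pairing such that the star product is defined by F ⋆ G = Σ_{n≥0} (ħ^n/n!) ⟨F^{(n)}, ((i/2)Δ)^{⊗n} G^{(n)}⟩ in the model case where A = ℂ[x₁,…,x_N] is polynomials in finitely many variables, Δ is an antisymmetric real N×N matrix, and F^{(n)} denotes the n-th total derivative. Then ⋆ is associative on A[[ħ]]. -/

import Mathlib

open MvPolynomial TensorProduct

noncomputable section

/-- Polynomials in `N` variables over `ℂ` (the model space of functionals). -/
abbrev MoyalPoly (N : ℕ) := MvPolynomial (Fin N) ℂ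

/-- The bidifferential operator `Σ_{i,j} K i j ∂_i ⊗ ∂_j` on `A ⊗ A`. -/
def moyalBidiff {N : ℕ} (K : Fin N → Fin N → ℂ) :
    (MoyalPoly N ⊗[ℂ] MoyalPoly N) →ₗ[ℂ] (MoyalPoly N ⊗[ℂ] MoyalPoly N) :=
  ∑ i : Fin N, ∑ j : Fin N,
    K i j • TensorProduct.map (pderiv i).toLinearMap (pderiv j).toLinearMap

/-- The coefficient of `ħ^n` in the star product of two polynomials:
`(1/n!) ⟨F^{(n)}, K^{⊗n} G^{(n)}⟩`, realized as multiplication after applying the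
bidifferential operator `n` times. -/
def moyalCoeff {N : ℕ} (K : Fin N → Fin N → ℂ) (F G : MoyalPoly N) (n : ℕ) : MoyalPoly N :=
  ((n.factorial : ℂ))⁻¹ • (LinearMap.mul' ℂ (MoyalPoly N)) ((moyalBidiff K)^[n] (F ⊗ₜ[ℂ] G))

/-- The star product with kernel `K`, extended ħ-bilinearly to formal power series in `ħ`:
`F ⋆ G = Σ_{n≥0} (ħ^n/n!) ⟨F^{(n)}, K^{⊗n} G^{(n)}⟩`. -/
def moyalStar {N : ℕ} (K : Fin N → Fin N → ℂ)
    (Φ Ψ : PowerSeries (MoyalPoly N)) : PowerSeries (MoyalPoly N) :=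
  PowerSeries.mk fun n =>
    ∑ p ∈ Finset.HasAntidiagonal.antidiagonal n, ∑ q ∈ Finset.HasAntidiagonal.antidiagonal p.2,
      moyalCoeff K (PowerSeries.coeff p.1 Φ) (PowerSeries.coeff q.1 Ψ) q.2

namespace MoyalAux
variable {N : ℕ} (K : Fin N → Fin N → ℂ)

def D (i : Fin N) : Module.End ℂ (MoyalPoly N) := (pderiv i).toLinearMap

abbrev T3 (N : ℕ) := (MoyalPoly N ⊗[ℂ] MoyalPoly N) ⊗[ℂ] MoyalPoly N
abbrev T3' (N : ℕ) := MoyalPoly N ⊗[ℂ] (MoyalPoly N ⊗[ℂ] MoyalPoly N)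

def B12 : Module.End ℂ (T3 N) :=
  ∑ i : Fin N, ∑ j : Fin N, K i j • TensorProduct.map (TensorProduct.map (D i) (D j)) LinearMap.id
def B13 : Module.End ℂ (T3 N) :=
  ∑ i : Fin N, ∑ j : Fin N, K i j • TensorProduct.map (TensorProduct.map (D i) LinearMap.id) (D j)
def B23 : Module.End ℂ (T3 N) :=
  ∑ i : Fin N, ∑ j : Fin N, K i j • TensorProduct.map (TensorProduct.map LinearMap.id (D i)) (D j)
def b12 : Module.End ℂ (T3' N) :=
  ∑ i : Fin N, ∑ j : Fin N, K i j • TensorProduct.map (D i) (TensorProduct.map (D j) LinearMap.id)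
def b13 : Module.End ℂ (T3' N) :=
  ∑ i : Fin N, ∑ j : Fin N, K i j • TensorProduct.map (D i) (TensorProduct.map LinearMap.id (D j))
def b23 : Module.End ℂ (T3' N) :=
  ∑ i : Fin N, ∑ j : Fin N, K i j • TensorProduct.map LinearMap.id (TensorProduct.map (D i) (D j))

lemma my_pderiv_comm (i j : Fin N) (f : MoyalPoly N) :
    pderiv i (pderiv j f) = pderiv j (pderiv i f) := by
  induction f using MvPolynomial.induction_on with
  | C a => simp
  | add f g hf hg => simp [hf, hg]
  | mul_X f k hf =>
    simp only [pderiv_mul, map_add, hf, pderiv_X]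
    rcases eq_or_ne i k with h | h <;> rcases eq_or_ne j k with h2 | h2 <;>
      simp_all [Pi.single_apply]

lemma D_commute (i j : Fin N) : Commute (D i) (D j) :=
  LinearMap.ext fun f => my_pderiv_comm i j f

lemma id_commute (f : Module.End ℂ (MoyalPoly N)) : Commute LinearMap.id f :=
  LinearMap.ext fun _ => rfl

lemma commute_mapmap_left (f1 g1 f2 g2 h1 h2 : Module.End ℂ (MoyalPoly N))
    (hf : Commute f1 f2) (hg : Commute g1 g2) (hh : Commute h1 h2) :
    Commute (map (map f1 g1) h1 : Module.End ℂ (T3 N)) (map (map f2 g2) h2) := by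
  unfold Commute SemiconjBy
  rw [Module.End.mul_eq_comp, Module.End.mul_eq_comp, ← map_comp, ← map_comp,
    ← map_comp, ← map_comp, ← Module.End.mul_eq_comp f1 f2, ← Module.End.mul_eq_comp g1 g2,
    ← Module.End.mul_eq_comp h1 h2, hf.eq, hg.eq, hh.eq,
    Module.End.mul_eq_comp, Module.End.mul_eq_comp, Module.End.mul_eq_comp]

lemma commute_mapmap_right (f1 g1 f2 g2 h1 h2 : Module.End ℂ (MoyalPoly N))
    (hf : Commute f1 f2) (hg : Commute g1 g2) (hh : Commute h1 h2) :
    Commute (map h1 (map f1 g1) : Module.End ℂ (T3' N)) (map h2 (map f2 g2)) := by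
  unfold Commute SemiconjBy
  rw [Module.End.mul_eq_comp, Module.End.mul_eq_comp, ← map_comp, ← map_comp,
    ← map_comp, ← map_comp, ← Module.End.mul_eq_comp f1 f2, ← Module.End.mul_eq_comp g1 g2,
    ← Module.End.mul_eq_comp h1 h2, hf.eq, hg.eq, hh.eq,
    Module.End.mul_eq_comp, Module.End.mul_eq_comp, Module.End.mul_eq_comp]

lemma commute_sum {M : Type*} [AddCommMonoid M] [Module ℂ M]
    (f g : Fin N → Fin N → Module.End ℂ M)
    (h : ∀ i j k l, Commute (f i j) (g k l)) (c d : Fin N → Fin N → ℂ) :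
    Commute (∑ i, ∑ j, c i j • f i j) (∑ i, ∑ j, d i j • g i j) := by
  apply Commute.sum_left; intro i _
  apply Commute.sum_left; intro j _
  apply Commute.smul_left
  apply Commute.sum_right; intro k _
  apply Commute.sum_right; intro l _
  exact (h i j k l).smul_right _

lemma commB12_B13 : Commute (B12 K) (B13 K) := by
  unfold B12 B13
  exact commute_sum _ _ (fun i j k l =>
    commute_mapmap_left (D i) (D j) (D k) LinearMap.id LinearMap.id (D l)
      (D_commute i k) (id_commute (D j)).symm (id_commute (D l))) _ _

lemma commB12_B23 : Commute (B12 K) (B23 K) := by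
  unfold B12 B23
  exact commute_sum _ _ (fun i j k l =>
    commute_mapmap_left (D i) (D j) LinearMap.id (D k) LinearMap.id (D l)
      (id_commute (D i)).symm (D_commute j k) (id_commute (D l))) _ _

lemma commB13_B23 : Commute (B13 K) (B23 K) := by
  unfold B13 B23
  exact commute_sum _ _ (fun i j k l =>
    commute_mapmap_left (D i) LinearMap.id LinearMap.id (D k) (D j) (D l)
      (id_commute (D i)).symm (id_commute (D k)) (D_commute j l)) _ _

lemma commb12_b13 : Commute (b12 K) (b13 K) := by
  unfold b12 b13
  exact commute_sum _ _ (fun i j k l =>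
    commute_mapmap_right (D j) LinearMap.id LinearMap.id (D l) (D i) (D k)
      (id_commute (D j)).symm (id_commute (D l)) (D_commute i k)) _ _

lemma commb12_b23 : Commute (b12 K) (b23 K) := by
  unfold b12 b23
  exact commute_sum _ _ (fun i j k l =>
    commute_mapmap_right (D j) LinearMap.id (D k) (D l) (D i) LinearMap.id
      (D_commute j k) (id_commute (D l)) (id_commute (D i)).symm) _ _

lemma commb13_b23 : Commute (b13 K) (b23 K) := by
  unfold b13 b23
  exact commute_sum _ _ (fun i j k l =>
    commute_mapmap_right LinearMap.id (D j) (D k) (D l) (D i) LinearMap.id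
      (id_commute (D k)) (D_commute j l) (id_commute (D i)).symm) _ _

def μ : MoyalPoly N ⊗[ℂ] MoyalPoly N →ₗ[ℂ] MoyalPoly N := LinearMap.mul' ℂ (MoyalPoly N)

def M1 : T3 N →ₗ[ℂ] MoyalPoly N ⊗[ℂ] MoyalPoly N := map μ LinearMap.id
def M2 : T3' N →ₗ[ℂ] MoyalPoly N ⊗[ℂ] MoyalPoly N := map LinearMap.id μ

lemma B12_eq : B12 K = LinearMap.rTensor (MoyalPoly N) (moyalBidiff K) := by
  unfold B12 moyalBidiff
  rw [← LinearMap.coe_rTensorHom, map_sum]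
  refine Finset.sum_congr rfl fun i _ => ?_
  rw [map_sum]
  refine Finset.sum_congr rfl fun j _ => ?_
  rw [map_smul]
  rfl

lemma b23_eq : b23 K = LinearMap.lTensor (MoyalPoly N) (moyalBidiff K) := by
  unfold b23 moyalBidiff
  rw [← LinearMap.coe_lTensorHom, map_sum]
  refine Finset.sum_congr rfl fun i _ => ?_
  rw [map_sum]
  refine Finset.sum_congr rfl fun j _ => ?_
  rw [map_smul]
  rfl

lemma intertwine_left :
    (moyalBidiff K) ∘ₗ (M1 (N := N)) = M1 ∘ₗ (B13 K + B23 K) := by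
  apply TensorProduct.ext_threefold
  intro F G H
  simp only [moyalBidiff, M1, B13, B23, LinearMap.comp_apply, LinearMap.add_apply,
    map_tmul, LinearMap.sum_apply, LinearMap.smul_apply, LinearMap.id_coe, id_eq,
    LinearMap.mul'_apply, D, pderiv_mul, add_tmul,
    map_add, map_sum, map_smul, smul_add, Finset.sum_add_distrib, μ,
    Derivation.coeFn_coe]

lemma intertwine_right :
    (moyalBidiff K) ∘ₗ (M2 (N := N)) = M2 ∘ₗ (b12 K + b13 K) := by
  apply TensorProduct.ext'
  intro F X
  induction X using TensorProduct.induction_on with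
  | zero => simp only [tmul_zero, LinearMap.map_zero]
  | add x y hx hy => simp only [tmul_add, LinearMap.map_add, hx, hy]
  | tmul G H => ?_
  simp only [moyalBidiff, M2, b12, b13, LinearMap.comp_apply, LinearMap.add_apply,
    map_tmul, LinearMap.sum_apply, LinearMap.smul_apply, LinearMap.id_coe, id_eq,
    LinearMap.mul'_apply, D, pderiv_mul, tmul_add, add_tmul,
    map_add, map_sum, map_smul, smul_add, Finset.sum_add_distrib, μ,
    Derivation.coeFn_coe]

lemma intertwine_left_pow (n : ℕ) :
    (moyalBidiff K ^ n) ∘ₗ (M1 (N := N)) = M1 ∘ₗ ((B13 K + B23 K) ^ n) := by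
  induction n with
  | zero => simp [pow_zero]; rfl
  | succ n ih =>
    rw [pow_succ', pow_succ', Module.End.mul_eq_comp, Module.End.mul_eq_comp,
      LinearMap.comp_assoc, ih, ← LinearMap.comp_assoc, intertwine_left,
      LinearMap.comp_assoc]

lemma intertwine_right_pow (n : ℕ) :
    (moyalBidiff K ^ n) ∘ₗ (M2 (N := N)) = M2 ∘ₗ ((b12 K + b13 K) ^ n) := by
  induction n with
  | zero => simp [pow_zero]; rfl
  | succ n ih =>
    rw [pow_succ', pow_succ', Module.End.mul_eq_comp, Module.End.mul_eq_comp,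
      LinearMap.comp_assoc, ih, ← LinearMap.comp_assoc, intertwine_right,
      LinearMap.comp_assoc]

lemma moyalCoeff_eq (F G : MoyalPoly N) (m : ℕ) :
    moyalCoeff K F G m = (m.factorial : ℂ)⁻¹ • μ ((moyalBidiff K ^ m) (F ⊗ₜ[ℂ] G)) := by
  rw [moyalCoeff, Module.End.pow_apply]; rfl

lemma left_term (F G H : MoyalPoly N) (i j : ℕ) :
    moyalCoeff K (moyalCoeff K F G i) H j
      = ((i.factorial : ℂ) * (j.factorial : ℂ))⁻¹ •
        μ (M1 (((B13 K + B23 K) ^ j * B12 K ^ i) ((F ⊗ₜ[ℂ] G) ⊗ₜ[ℂ] H))) := by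
  rw [moyalCoeff_eq, moyalCoeff_eq, ← smul_tmul', map_smul, map_smul, smul_smul]
  have h1 : (μ ((moyalBidiff K ^ i) (F ⊗ₜ[ℂ] G))) ⊗ₜ[ℂ] H
      = M1 ((B12 K ^ i) ((F ⊗ₜ[ℂ] G) ⊗ₜ[ℂ] H)) := by
    rw [B12_eq, LinearMap.rTensor_pow, LinearMap.rTensor_tmul]
    rfl
  rw [h1]
  have h2 := LinearMap.congr_fun (intertwine_left_pow K j)
    ((B12 K ^ i) ((F ⊗ₜ[ℂ] G) ⊗ₜ[ℂ] H))
  simp only [LinearMap.comp_apply] at h2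
  rw [h2, ← Module.End.mul_apply, mul_inv, mul_comm ((j.factorial : ℂ))⁻¹]

lemma right_term (F G H : MoyalPoly N) (i j : ℕ) :
    moyalCoeff K F (moyalCoeff K G H i) j
      = ((i.factorial : ℂ) * (j.factorial : ℂ))⁻¹ •
        μ (M2 (((b12 K + b13 K) ^ j * b23 K ^ i) (F ⊗ₜ[ℂ] (G ⊗ₜ[ℂ] H)))) := by
  rw [moyalCoeff_eq, moyalCoeff_eq, tmul_smul, map_smul, map_smul, smul_smul]
  have h1 : F ⊗ₜ[ℂ] (μ ((moyalBidiff K ^ i) (G ⊗ₜ[ℂ] H)))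
      = M2 ((b23 K ^ i) (F ⊗ₜ[ℂ] (G ⊗ₜ[ℂ] H))) := by
    rw [b23_eq, LinearMap.lTensor_pow, LinearMap.lTensor_tmul]
    rfl
  rw [h1]
  have h2 := LinearMap.congr_fun (intertwine_right_pow K j)
    ((b23 K ^ i) (F ⊗ₜ[ℂ] (G ⊗ₜ[ℂ] H)))
  simp only [LinearMap.comp_apply] at h2
  rw [h2, ← Module.End.mul_apply, mul_inv, mul_comm ((j.factorial : ℂ))⁻¹]

lemma factorial_inv_eq (a b : ℕ) :
    ((a.factorial : ℂ) * (b.factorial : ℂ))⁻¹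
      = ((a + b).factorial : ℂ)⁻¹ * ((a + b).choose a : ℂ) := by
  have h : ((a + b).choose a * a.factorial * b.factorial : ℕ) = (a + b).factorial := by
    rw [Nat.choose_symm_add]
    exact Nat.add_choose_mul_factorial_mul_factorial a b
  have hc : (((a + b).choose a : ℕ) : ℂ) * (a.factorial : ℂ) * (b.factorial : ℂ)
      = ((a + b).factorial : ℂ) := by
    exact_mod_cast congrArg (Nat.cast : ℕ → ℂ) h
  have h1 : (a.factorial : ℂ) ≠ 0 := Nat.cast_ne_zero.mpr a.factorial_ne_zero
  have h2 : (b.factorial : ℂ) ≠ 0 := Nat.cast_ne_zero.mpr b.factorial_ne_zero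
  have h3 : ((a + b).factorial : ℂ) ≠ 0 := Nat.cast_ne_zero.mpr (a + b).factorial_ne_zero
  field_simp
  linear_combination -hc

lemma left_sum (F G H : MoyalPoly N) (n : ℕ) :
    ∑ ij ∈ Finset.HasAntidiagonal.antidiagonal n, moyalCoeff K (moyalCoeff K F G ij.1) H ij.2
      = (n.factorial : ℂ)⁻¹ •
        μ (M1 (((B12 K + (B13 K + B23 K)) ^ n) ((F ⊗ₜ[ℂ] G) ⊗ₜ[ℂ] H))) := by
  have hc : Commute (B12 K) (B13 K + B23 K) :=
    (commB12_B13 K).add_right (commB12_B23 K)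
  rw [hc.add_pow']
  simp only [LinearMap.sum_apply, map_sum, Finset.smul_sum, LinearMap.smul_apply, map_nsmul]
  refine Finset.sum_congr rfl fun ij hij => ?_
  rw [left_term]
  have hij' : ij.1 + ij.2 = n := Finset.HasAntidiagonal.mem_antidiagonal.mp hij
  have hcomm : (B13 K + B23 K) ^ ij.2 * B12 K ^ ij.1
      = B12 K ^ ij.1 * (B13 K + B23 K) ^ ij.2 := (hc.pow_pow ij.1 ij.2).eq.symm
  rw [hcomm, factorial_inv_eq, hij', ← Nat.cast_smul_eq_nsmul ℂ, LinearMap.smul_apply,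
    map_smul, map_smul, smul_smul]

lemma right_sum (F G H : MoyalPoly N) (n : ℕ) :
    ∑ ij ∈ Finset.HasAntidiagonal.antidiagonal n, moyalCoeff K F (moyalCoeff K G H ij.1) ij.2
      = (n.factorial : ℂ)⁻¹ •
        μ (M2 (((b23 K + (b12 K + b13 K)) ^ n) (F ⊗ₜ[ℂ] (G ⊗ₜ[ℂ] H)))) := by
  have hc : Commute (b23 K) (b12 K + b13 K) :=
    ((commb12_b23 K).symm.add_right (commb13_b23 K).symm)
  rw [hc.add_pow']
  simp only [LinearMap.sum_apply, map_sum, Finset.smul_sum, LinearMap.smul_apply, map_nsmul]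
  refine Finset.sum_congr rfl fun ij hij => ?_
  rw [right_term]
  have hij' : ij.1 + ij.2 = n := Finset.HasAntidiagonal.mem_antidiagonal.mp hij
  have hcomm : (b12 K + b13 K) ^ ij.2 * b23 K ^ ij.1
      = b23 K ^ ij.1 * (b12 K + b13 K) ^ ij.2 := (hc.pow_pow ij.1 ij.2).eq.symm
  rw [hcomm, factorial_inv_eq, hij', ← Nat.cast_smul_eq_nsmul ℂ, smul_smul]

def e : T3 N ≃ₗ[ℂ] T3' N := TensorProduct.assoc ℂ (MoyalPoly N) (MoyalPoly N) (MoyalPoly N)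

lemma e_intertwine :
    (b23 K + (b12 K + b13 K)) ∘ₗ (e (N := N)).toLinearMap
      = (e (N := N)).toLinearMap ∘ₗ (B12 K + (B13 K + B23 K)) := by
  apply TensorProduct.ext_threefold
  intro F G H
  simp only [B12, B13, B23, b12, b13, b23, e, LinearMap.comp_apply, LinearMap.add_apply,
    LinearEquiv.coe_coe, assoc_tmul, map_tmul, LinearMap.sum_apply, LinearMap.smul_apply,
    LinearMap.id_coe, id_eq, map_add, map_sum, map_smul, smul_add, Finset.sum_add_distrib]
  abel

lemma e_intertwine_pow (n : ℕ) :
    ((b23 K + (b12 K + b13 K)) ^ n) ∘ₗ (e (N := N)).toLinearMap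
      = (e (N := N)).toLinearMap ∘ₗ ((B12 K + (B13 K + B23 K)) ^ n) := by
  induction n with
  | zero => simp [pow_zero]; rfl
  | succ n ih =>
    rw [pow_succ', pow_succ', Module.End.mul_eq_comp, Module.End.mul_eq_comp,
      LinearMap.comp_assoc, ih, ← LinearMap.comp_assoc, e_intertwine,
      LinearMap.comp_assoc]

lemma mu_transfer :
    (μ (N := N)) ∘ₗ M2 ∘ₗ (e (N := N)).toLinearMap = μ ∘ₗ M1 := by
  apply TensorProduct.ext_threefold
  intro F G H
  simp only [LinearMap.comp_apply, LinearEquiv.coe_coe, e, assoc_tmul, M1, M2, μ,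
    map_tmul, LinearMap.mul'_apply, LinearMap.id_coe, id_eq, mul_assoc]

lemma core (F G H : MoyalPoly N) (n : ℕ) :
    ∑ ij ∈ Finset.HasAntidiagonal.antidiagonal n, moyalCoeff K (moyalCoeff K F G ij.1) H ij.2
      = ∑ ij ∈ Finset.HasAntidiagonal.antidiagonal n, moyalCoeff K F (moyalCoeff K G H ij.1) ij.2 := by
  rw [left_sum, right_sum]
  have h1 := LinearMap.congr_fun (e_intertwine_pow K n) ((F ⊗ₜ[ℂ] G) ⊗ₜ[ℂ] H)
  simp only [LinearMap.comp_apply, LinearEquiv.coe_coe] at h1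
  have he : (e (N := N)) ((F ⊗ₜ[ℂ] G) ⊗ₜ[ℂ] H) = F ⊗ₜ[ℂ] (G ⊗ₜ[ℂ] H) := by
    simp [e]
  rw [he] at h1
  have h2 := LinearMap.congr_fun (mu_transfer (N := N))
    (((B12 K + (B13 K + B23 K)) ^ n) ((F ⊗ₜ[ℂ] G) ⊗ₜ[ℂ] H))
  simp only [LinearMap.comp_apply, LinearEquiv.coe_coe] at h2
  rw [h1, h2]

section Reindex
variable {M : Type*} [AddCommMonoid M]
open Finset

abbrev I4 : Type := Σ _p : ℕ × ℕ, Σ _q : ℕ × ℕ, Σ _r : ℕ × ℕ, ℕ × ℕ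

lemma sum_sigma4 (S1 : Finset (ℕ × ℕ)) (S2 : ℕ × ℕ → Finset (ℕ × ℕ))
    (S3 : ℕ × ℕ → ℕ × ℕ → Finset (ℕ × ℕ)) (S4 : ℕ × ℕ → ℕ × ℕ → ℕ × ℕ → Finset (ℕ × ℕ))
    (f : ℕ × ℕ → ℕ × ℕ → ℕ × ℕ → ℕ × ℕ → M) :
    ∑ p ∈ S1, ∑ q ∈ S2 p, ∑ r ∈ S3 p q, ∑ s ∈ S4 p q r, f p q r s
      = ∑ x ∈ S1.sigma (fun p => (S2 p).sigma fun q => (S3 p q).sigma fun r => S4 p q r),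
          f x.1 x.2.1 x.2.2.1 x.2.2.2 := by
  rw [Finset.sum_sigma]
  refine Finset.sum_congr rfl fun p _ => ?_
  rw [Finset.sum_sigma]
  refine Finset.sum_congr rfl fun q _ => ?_
  rw [Finset.sum_sigma]

lemma reindexL (f : ℕ → ℕ → ℕ → ℕ → ℕ → M) (n : ℕ) :
    (∑ p ∈ HasAntidiagonal.antidiagonal n, ∑ q ∈ HasAntidiagonal.antidiagonal p.2, ∑ r ∈ HasAntidiagonal.antidiagonal p.1,
        ∑ s ∈ HasAntidiagonal.antidiagonal r.2, f r.1 s.1 q.1 s.2 q.2)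
      = ∑ u ∈ HasAntidiagonal.antidiagonal n, ∑ v ∈ HasAntidiagonal.antidiagonal u.2, ∑ w ∈ HasAntidiagonal.antidiagonal v.2,
          ∑ z ∈ HasAntidiagonal.antidiagonal w.2, f u.1 v.1 w.1 z.1 z.2 := by
  rw [sum_sigma4 (HasAntidiagonal.antidiagonal n) (fun p => HasAntidiagonal.antidiagonal p.2)
      (fun p _ => HasAntidiagonal.antidiagonal p.1) (fun _ _ r => HasAntidiagonal.antidiagonal r.2)
      (fun p q r s => f r.1 s.1 q.1 s.2 q.2),
    sum_sigma4 (HasAntidiagonal.antidiagonal n) (fun u => HasAntidiagonal.antidiagonal u.2)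
      (fun _ v => HasAntidiagonal.antidiagonal v.2) (fun _ _ w => HasAntidiagonal.antidiagonal w.2)
      (fun u v w z => f u.1 v.1 w.1 z.1 z.2)]
  refine Finset.sum_nbij'
    (fun x => ⟨(x.2.2.1.1, x.2.2.2.1 + x.2.2.2.2 + x.1.2), (x.2.2.2.1, x.2.2.2.2 + x.1.2),
      (x.2.1.1, x.2.2.2.2 + x.2.1.2), (x.2.2.2.2, x.2.1.2)⟩)
    (fun y => ⟨(y.1.1 + y.2.1.1 + y.2.2.2.1, y.2.2.1.1 + y.2.2.2.2), (y.2.2.1.1, y.2.2.2.2),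
      (y.1.1, y.2.1.1 + y.2.2.2.1), (y.2.1.1, y.2.2.2.1)⟩)
    ?_ ?_ ?_ ?_ ?_ <;>
  · rintro ⟨⟨p1, p2⟩, ⟨q1, q2⟩, ⟨r1, r2⟩, s1, s2⟩ h
    simp only [Finset.mem_sigma, Finset.HasAntidiagonal.mem_antidiagonal, Sigma.ext_iff, Prod.ext_iff,
      heq_eq_eq, and_true, true_and] at h ⊢
    try rfl
    try omega

lemma reindexR (f : ℕ → ℕ → ℕ → ℕ → ℕ → M) (n : ℕ) :
    (∑ p ∈ HasAntidiagonal.antidiagonal n, ∑ q ∈ HasAntidiagonal.antidiagonal p.2, ∑ r ∈ HasAntidiagonal.antidiagonal q.1,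
        ∑ s ∈ HasAntidiagonal.antidiagonal r.2, f p.1 r.1 s.1 s.2 q.2)
      = ∑ u ∈ HasAntidiagonal.antidiagonal n, ∑ v ∈ HasAntidiagonal.antidiagonal u.2, ∑ w ∈ HasAntidiagonal.antidiagonal v.2,
          ∑ z ∈ HasAntidiagonal.antidiagonal w.2, f u.1 v.1 w.1 z.1 z.2 := by
  rw [sum_sigma4 (HasAntidiagonal.antidiagonal n) (fun p => HasAntidiagonal.antidiagonal p.2)
      (fun _ q => HasAntidiagonal.antidiagonal q.1) (fun _ _ r => HasAntidiagonal.antidiagonal r.2)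
      (fun p q r s => f p.1 r.1 s.1 s.2 q.2),
    sum_sigma4 (HasAntidiagonal.antidiagonal n) (fun u => HasAntidiagonal.antidiagonal u.2)
      (fun _ v => HasAntidiagonal.antidiagonal v.2) (fun _ _ w => HasAntidiagonal.antidiagonal w.2)
      (fun u v w z => f u.1 v.1 w.1 z.1 z.2)]
  refine Finset.sum_nbij'
    (fun x => ⟨(x.1.1, x.1.2), (x.2.2.1.1, x.2.2.2.1 + x.2.2.2.2 + x.2.1.2),
      (x.2.2.2.1, x.2.2.2.2 + x.2.1.2), (x.2.2.2.2, x.2.1.2)⟩)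
    (fun y => ⟨(y.1.1, y.1.2), (y.2.1.1 + y.2.2.1.1 + y.2.2.2.1, y.2.2.2.2),
      (y.2.1.1, y.2.2.1.1 + y.2.2.2.1), (y.2.2.1.1, y.2.2.2.1)⟩)
    ?_ ?_ ?_ ?_ ?_ <;>
  · rintro ⟨⟨p1, p2⟩, ⟨q1, q2⟩, ⟨r1, r2⟩, s1, s2⟩ h
    simp only [Finset.mem_sigma, Finset.HasAntidiagonal.mem_antidiagonal, Sigma.ext_iff, Prod.ext_iff,
      heq_eq_eq, and_true, true_and] at h ⊢
    try rfl
    try omega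

end Reindex

lemma moyalCoeff_sum_left {ι : Type*} (s : Finset ι) (f : ι → MoyalPoly N)
    (G : MoyalPoly N) (m : ℕ) :
    moyalCoeff K (∑ x ∈ s, f x) G m = ∑ x ∈ s, moyalCoeff K (f x) G m := by
  simp only [moyalCoeff_eq, sum_tmul, map_sum, Finset.smul_sum]

lemma moyalCoeff_sum_right {ι : Type*} (s : Finset ι) (f : ι → MoyalPoly N)
    (G : MoyalPoly N) (m : ℕ) :
    moyalCoeff K G (∑ x ∈ s, f x) m = ∑ x ∈ s, moyalCoeff K G (f x) m := by
  simp only [moyalCoeff_eq, tmul_sum, map_sum, Finset.smul_sum]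

end MoyalAux


theorem moyalStar_assoc' {N : ℕ} (K : Fin N → Fin N → ℂ)
    (Φ Ψ Χ : PowerSeries (MoyalPoly N)) :
    moyalStar K (moyalStar K Φ Ψ) Χ = moyalStar K Φ (moyalStar K Ψ Χ) := by
  refine PowerSeries.ext fun n => ?_
  simp only [moyalStar, PowerSeries.coeff_mk]
  simp only [MoyalAux.moyalCoeff_sum_left, MoyalAux.moyalCoeff_sum_right]
  have hL := MoyalAux.reindexL (M := MoyalPoly N)
      (fun a b c m1 m2 => moyalCoeff K (moyalCoeff K (PowerSeries.coeff a Φ)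
        (PowerSeries.coeff b Ψ) m1) (PowerSeries.coeff c Χ) m2) n
  have hR := MoyalAux.reindexR (M := MoyalPoly N)
      (fun a b c m1 m2 => moyalCoeff K (PowerSeries.coeff a Φ)
        (moyalCoeff K (PowerSeries.coeff b Ψ)
          (PowerSeries.coeff c Χ) m1) m2) n
  rw [hL, hR]
  refine Finset.sum_congr rfl fun u _ => ?_
  refine Finset.sum_congr rfl fun v _ => ?_
  refine Finset.sum_congr rfl fun w _ => ?_
  exact MoyalAux.core K _ _ _ w.2

/-- Associativity of the Moyal star product built from `(i/2)Δ` with `Δ` an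
antisymmetric real matrix, on polynomials in finitely many variables
(formal power series in `ħ`). -/
theorem moyalStar_assoc {N : ℕ} (Δ : Fin N → Fin N → ℝ)
    (hanti : ∀ i j, Δ i j = - Δ j i)
    (Φ Ψ Χ : PowerSeries (MoyalPoly N)) :
    moyalStar (fun i j => (Complex.I / 2) * (Δ i j : ℂ))
        (moyalStar (fun i j => (Complex.I / 2) * (Δ i j : ℂ)) Φ Ψ) Χ =
      moyalStar (fun i j => (Complex.I / 2) * (Δ i j : ℂ)) Φ
        (moyalStar (fun i j => (Complex.I / 2) * (Δ i j : ℂ)) Ψ Χ) :=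
  moyalStar_assoc' _ Φ Ψ Χ

end
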